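/- Let A ∈ ℝ^{n×n}, B ∈ ℝ^{n×m} with (A,B) regularizable and Ã B̃ = 0, where Ã = Π_{R(B)⊥} A and B̃ = Π_{R(B)} A. Let x_0 ∈ ℝⁿ, let (x_t) be the DGR closed-loop trajectory with α = 0, let z̄_0 = x_0/‖x_0‖ (and z̄_0 = 0 if x_0 = 0), and set a_s = ‖Ã^s A z̄_0‖. Then for every t with 1 ≤ t + 1 ≤ n, ‖x_{t+1}‖ ≤ ( M_{t+1}(A) + a_t + Σ_{r=1}^{t−1} M_r(A) a_{t−r} ) ‖x_0‖. -/

import Mathlib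

open Matrix

noncomputable section

/-- The Euclidean norm on `Fin n → ℝ`. -/
def eucNorm {n : ℕ} (x : Fin n → ℝ) : ℝ := Real.sqrt (∑ i, (x i) ^ 2)

/-- `P` is the matrix of the orthogonal projection of `ℝⁿ` onto the subspace `V`:
the unique symmetric idempotent matrix whose range is `V`. -/
def IsProjMatrix {n : ℕ} (P : Matrix (Fin n) (Fin n) ℝ) (V : Submodule ℝ (Fin n → ℝ)) : Prop :=
  P.IsSymm ∧ P * P = P ∧ LinearMap.range P.mulVecLin = V

/-- A real square matrix is Schur stable if every complex eigenvalue has modulus `< 1`,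
i.e. its spectral radius is `< 1`. -/
def SchurStable {n : ℕ} (M : Matrix (Fin n) (Fin n) ℝ) : Prop :=
  ∀ (μ : ℂ) (v : Fin n → ℂ), v ≠ 0 →
    (M.map (algebraMap ℝ ℂ)).mulVec v = μ • v → ‖μ‖ < 1

/-- The operator norm of a matrix induced by the Euclidean vector norm:
`‖M‖ = sup {‖M u‖ : ‖u‖ = 1}`. -/
def l2OpNorm {n m : ℕ} (M : Matrix (Fin n) (Fin m) ℝ) : ℝ :=
  sSup {c | ∃ x : Fin m → ℝ, eucNorm x = 1 ∧ c = eucNorm (M.mulVec x)}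

/-- The instability number of order `t` of `A`:
`M_t(A) = sup { ∏ i ‖A v i‖ : (v 1, …, v t) orthonormal in ℝⁿ }`. -/
def instabilityNumber {n : ℕ} (A : Matrix (Fin n) (Fin n) ℝ) (t : ℕ) : ℝ :=
  sSup {c | ∃ v : Fin t → (Fin n → ℝ),
    (∀ i j, v i ⬝ᵥ v j = if i = j then 1 else 0) ∧ c = ∏ i, eucNorm (A.mulVec (v i))}

namespace StmtElevenAux

variable {n : ℕ}

lemma eucNorm_eq (x : Fin n → ℝ) :
    eucNorm x = ‖(WithLp.equiv 2 (Fin n → ℝ)).symm x‖ := by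
  rw [eucNorm, EuclideanSpace.norm_eq]
  congr 1
  exact Finset.sum_congr rfl fun i _ => by
    simp [WithLp.equiv_symm_apply, PiLp.toLp_apply, Real.norm_eq_abs, sq_abs]

lemma eucNorm_nonneg (x : Fin n → ℝ) : 0 ≤ eucNorm x := Real.sqrt_nonneg _

lemma eucNorm_zero : eucNorm (0 : Fin n → ℝ) = 0 := by
  simp [eucNorm]

lemma eucNorm_eq_zero {x : Fin n → ℝ} (h : eucNorm x = 0) : x = 0 := by
  rw [eucNorm_eq] at h
  have h2 := norm_eq_zero.mp h
  have h3 : (WithLp.equiv 2 (Fin n → ℝ)) ((WithLp.equiv 2 (Fin n → ℝ)).symm x)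
      = (WithLp.equiv 2 (Fin n → ℝ)) 0 := by rw [h2]
  simpa using h3

lemma eucNorm_add_le (x y : Fin n → ℝ) : eucNorm (x + y) ≤ eucNorm x + eucNorm y := by
  rw [eucNorm_eq, eucNorm_eq, eucNorm_eq]
  exact norm_add_le ((WithLp.equiv 2 (Fin n → ℝ)).symm x) ((WithLp.equiv 2 (Fin n → ℝ)).symm y)

lemma eucNorm_smul (c : ℝ) (x : Fin n → ℝ) : eucNorm (c • x) = |c| * eucNorm x := by
  rw [eucNorm_eq, eucNorm_eq]
  have h : ((WithLp.equiv 2 (Fin n → ℝ)).symm (c • x))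
      = c • ((WithLp.equiv 2 (Fin n → ℝ)).symm x) := rfl
  rw [h, norm_smul, Real.norm_eq_abs]

lemma dot_eq_inner (x y : Fin n → ℝ) :
    x ⬝ᵥ y = (inner ℝ ((WithLp.equiv 2 (Fin n → ℝ)).symm x)
      ((WithLp.equiv 2 (Fin n → ℝ)).symm y) : ℝ) := by
  rw [PiLp.inner_apply]
  simp [dotProduct, WithLp.equiv_symm_apply, PiLp.toLp_apply, mul_comm]

lemma dot_self_eq (x : Fin n → ℝ) : x ⬝ᵥ x = eucNorm x ^ 2 := by
  rw [dot_eq_inner, eucNorm_eq, real_inner_self_eq_norm_sq]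

lemma abs_dot_le (x y : Fin n → ℝ) : |x ⬝ᵥ y| ≤ eucNorm x * eucNorm y := by
  rw [dot_eq_inner, eucNorm_eq, eucNorm_eq]
  exact abs_real_inner_le_norm _ _

lemma mulVec_dot_mulVec (M N : Matrix (Fin n) (Fin n) ℝ) (x y : Fin n → ℝ) :
    (M *ᵥ x) ⬝ᵥ (N *ᵥ y) = x ⬝ᵥ ((Mᵀ * N) *ᵥ y) := by
  rw [dotProduct_mulVec x, dotProduct_mulVec (M *ᵥ x), vecMul_mulVec]

lemma proj_norm_le {P : Matrix (Fin n) (Fin n) ℝ} (hs : P.IsSymm) (hi : P * P = P)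
    (v : Fin n → ℝ) : eucNorm (P *ᵥ v) ≤ eucNorm v := by
  have h1 : eucNorm (P *ᵥ v) ^ 2 = v ⬝ᵥ (P *ᵥ v) := by
    rw [← dot_self_eq, mulVec_dot_mulVec]
    rw [Matrix.IsSymm] at hs
    rw [hs, hi, dotProduct_comm]
  have h2 : v ⬝ᵥ (P *ᵥ v) ≤ eucNorm v * eucNorm (P *ᵥ v) :=
    (le_abs_self _).trans (abs_dot_le _ _)
  by_cases hz : eucNorm (P *ᵥ v) = 0
  · rw [hz]; exact eucNorm_nonneg v
  · have hpos : 0 < eucNorm (P *ᵥ v) := lt_of_le_of_ne (eucNorm_nonneg _) (Ne.symm hz)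
    nlinarith [h1, h2]

lemma proj_orth {P : Matrix (Fin n) (Fin n) ℝ} (hs : P.IsSymm) (hi : P * P = P)
    (v w : Fin n → ℝ) : ((1 - P) *ᵥ v) ⬝ᵥ (P *ᵥ w) = 0 := by
  rw [mulVec_dot_mulVec]
  have h : (1 - P)ᵀ * P = 0 := by
    rw [transpose_sub, transpose_one, Matrix.IsSymm.eq hs, sub_mul, one_mul, hi, sub_self]
  rw [h]
  simp

/-- Frobenius-type bound. -/
lemma exists_opBound (A : Matrix (Fin n) (Fin n) ℝ) :
    ∃ C : ℝ, 0 ≤ C ∧ ∀ v : Fin n → ℝ, eucNorm (A *ᵥ v) ≤ C * eucNorm v := by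
  refine ⟨Real.sqrt (∑ i, ∑ j, (A i j) ^ 2), Real.sqrt_nonneg _, fun v => ?_⟩
  rw [eucNorm, eucNorm, ← Real.sqrt_mul (by positivity)]
  apply Real.sqrt_le_sqrt
  rw [Finset.sum_mul]
  apply Finset.sum_le_sum
  intro i _
  rw [Matrix.mulVec, dotProduct]
  calc (∑ j, A i j * v j) ^ 2 ≤ (∑ j, (A i j) ^ 2) * (∑ j, (v j) ^ 2) :=
        Finset.sum_mul_sq_le_sq_mul_sq Finset.univ _ _
    _ = _ := rfl

lemma instabilityNumber_nonneg (A : Matrix (Fin n) (Fin n) ℝ) (t : ℕ) :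
    0 ≤ instabilityNumber A t := by
  apply Real.sSup_nonneg
  rintro c ⟨v, -, rfl⟩
  exact Finset.prod_nonneg fun i _ => eucNorm_nonneg _

lemma instabilityNumber_bddAbove (A : Matrix (Fin n) (Fin n) ℝ) (t : ℕ) :
    BddAbove {c | ∃ v : Fin t → (Fin n → ℝ),
      (∀ i j, v i ⬝ᵥ v j = if i = j then 1 else 0) ∧ c = ∏ i, eucNorm (A.mulVec (v i))} := by
  obtain ⟨C, hC0, hC⟩ := exists_opBound A
  refine ⟨C ^ t, ?_⟩
  rintro c ⟨v, hv, rfl⟩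
  calc ∏ i, eucNorm (A *ᵥ v i) ≤ ∏ _i : Fin t, C := by
        apply Finset.prod_le_prod (fun i _ => eucNorm_nonneg _)
        intro i _
        have h1 : eucNorm (v i) = 1 := by
          have h2 := dot_self_eq (v i)
          rw [hv i i] at h2
          simp at h2
          have h0 := eucNorm_nonneg (v i)
          nlinarith [h2]
        have h3 := hC (v i)
        rw [h1, mul_one] at h3
        exact h3
    _ = C ^ t := by simp

/-- A product of `T - s` consecutive "gain ratios" of pairwise-orthogonal vectors is at most
the instability number of order `T - s`. -/
lemma prod_le_instab (A : Matrix (Fin n) (Fin n) ℝ) (s T : ℕ) (q : ℕ → Fin n → ℝ)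
    (horth : ∀ i j, i < j → q i ⬝ᵥ q j = 0) :
    ∏ i ∈ Finset.Ico s T, (eucNorm (A *ᵥ q i) / eucNorm (q i))
      ≤ instabilityNumber A (T - s) := by
  by_cases hz : ∃ i ∈ Finset.Ico s T, q i = 0
  · obtain ⟨i, hi, hqi⟩ := hz
    have h0 : eucNorm (A *ᵥ q i) / eucNorm (q i) = 0 := by
      rw [hqi, Matrix.mulVec_zero, eucNorm_zero, zero_div]
    rw [Finset.prod_eq_zero hi h0]
    exact instabilityNumber_nonneg A _
  · push_neg at hz
    set v : Fin (T - s) → (Fin n → ℝ) :=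
      fun k => (eucNorm (q (s + k)))⁻¹ • q (s + k) with hvdef
    have hmem : ∀ k : Fin (T - s), s + (k : ℕ) ∈ Finset.Ico s T := by
      intro k
      have := k.isLt
      simp only [Finset.mem_Ico]
      omega
    have hqn : ∀ k : Fin (T - s), eucNorm (q (s + k)) ≠ 0 := by
      intro k h
      exact hz _ (hmem k) (eucNorm_eq_zero h)
    have hon : ∀ i j, v i ⬝ᵥ v j = if i = j then 1 else 0 := by
      intro i j
      by_cases hij : i = j
      · subst hij
        rw [if_pos rfl, hvdef]
        simp only [smul_dotProduct, dotProduct_smul, smul_eq_mul]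
        rw [dot_self_eq]
        have := hqn i
        field_simp
      · rw [if_neg hij, hvdef]
        simp only [smul_dotProduct, dotProduct_smul, smul_eq_mul]
        have hij' : (i : ℕ) ≠ (j : ℕ) := fun h => hij (Fin.ext h)
        rcases lt_or_gt_of_ne hij' with h | h
        · rw [horth _ _ (by omega)]; ring
        · rw [dotProduct_comm, horth _ _ (by omega)]; ring
    have hval : ∏ i ∈ Finset.Ico s T, (eucNorm (A *ᵥ q i) / eucNorm (q i))
        = ∏ k, eucNorm (A *ᵥ v k) := by
      rw [Finset.prod_Ico_eq_prod_range, ← Fin.prod_univ_eq_prod_range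
        (fun k => eucNorm (A *ᵥ q (s + k)) / eucNorm (q (s + k))) (T - s)]
      apply Finset.prod_congr rfl
      intro k _
      rw [hvdef]
      simp only [Matrix.mulVec_smul]
      rw [eucNorm_smul, abs_of_nonneg (inv_nonneg.mpr (eucNorm_nonneg _))]
      rw [div_eq_inv_mul]
    rw [hval]
    exact le_csSup (instabilityNumber_bddAbove A (T - s)) ⟨v, hon, rfl⟩

end StmtElevenAux

open StmtElevenAux in
/-- Bound on the DGR trajectory via instability numbers, for regularizable `(A,B)`
with `Ã B̃ = 0`. -/
theorem stmt11 {n m : ℕ} (A : Matrix (Fin n) (Fin n) ℝ) (B : Matrix (Fin n) (Fin m) ℝ)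
    (PB : Matrix (Fin n) (Fin n) ℝ)
    (hPB : IsProjMatrix PB (LinearMap.range B.mulVecLin))
    (hreg : SchurStable ((1 - PB) * A))
    (hAB : ((1 - PB) * A) * (PB * A) = 0)
    (x : ℕ → Fin n → ℝ)
    (Pv : ℕ → Matrix (Fin n) (Fin n) ℝ)
    (hPv : ∀ t, IsProjMatrix (Pv t)
      (Submodule.span ℝ (Set.range fun i : Fin t => x i.val)))
    (hdyn : ∀ t, x (t + 1) = A.mulVec (x t) - (PB * A).mulVec ((Pv t).mulVec (x t)))
    (zbar0 : Fin n → ℝ)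
    (hzbar0 : zbar0 = if x 0 = 0 then 0 else (eucNorm (x 0))⁻¹ • x 0)
    (a : ℕ → ℝ)
    (ha : ∀ s, a s = eucNorm ((((1 - PB) * A) ^ s * A).mulVec zbar0)) :
    ∀ t, t + 1 ≤ n →
      eucNorm (x (t + 1)) ≤
        (instabilityNumber A (t + 1) + a t
          + ∑ r ∈ Finset.Icc 1 (t - 1), instabilityNumber A r * a (t - r))
          * eucNorm (x 0) := by
  obtain ⟨hPBs, hPBi, -⟩ := hPB
  set At := (1 - PB) * A with hAtdef
  set Bt := PB * A with hBtdef
  set q : ℕ → Fin n → ℝ := fun t => x t - (Pv t) *ᵥ (x t) with hqdef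
  set c : ℕ → ℝ := fun i => eucNorm (A *ᵥ q i) / eucNorm (q i) with hcdef
  have hPvs : ∀ t, (Pv t).IsSymm := fun t => (hPv t).1
  have hPvi : ∀ t, Pv t * Pv t = Pv t := fun t => (hPv t).2.1
  have hQs : ∀ t, (1 - Pv t).IsSymm := by
    intro t
    rw [Matrix.IsSymm, transpose_sub, transpose_one, (hPvs t).eq]
  have hQi : ∀ t, (1 - Pv t) * (1 - Pv t) = 1 - Pv t := by
    intro t
    rw [sub_mul, one_mul, mul_sub, mul_one, hPvi t]
    abel
  have hqQ : ∀ t, q t = (1 - Pv t) *ᵥ (x t) := by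
    intro t
    rw [sub_mulVec, one_mulVec]
  have hnq : ∀ t (z : Fin n → ℝ), eucNorm ((1 - Pv t) *ᵥ z) ≤ eucNorm z :=
    fun t z => proj_norm_le (hQs t) (hQi t) z
  have hPBn : ∀ z : Fin n → ℝ, eucNorm (PB *ᵥ z) ≤ eucNorm z :=
    fun z => proj_norm_le hPBs hPBi z
  have hAq : ∀ i, eucNorm (A *ᵥ q i) = c i * eucNorm (q i) := by
    intro i
    by_cases h : q i = 0
    · rw [hcdef]
      simp only [h, Matrix.mulVec_zero, eucNorm_zero, zero_div, zero_mul]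
    · have hne : eucNorm (q i) ≠ 0 := fun hh => h (eucNorm_eq_zero hh)
      rw [hcdef]
      field_simp
  have hc0 : ∀ i, 0 ≤ c i := fun i => div_nonneg (eucNorm_nonneg _) (eucNorm_nonneg _)
  have hPv0 : ∀ z : Fin n → ℝ, (Pv 0) *ᵥ z = 0 := by
    intro z
    have h := (hPv 0).2.2
    have hmem : (Pv 0).mulVecLin z ∈ LinearMap.range (Pv 0).mulVecLin :=
      ⟨z, rfl⟩
    rw [h] at hmem
    have hempty : (Set.range fun i : Fin 0 => x i.val) = ∅ := Set.range_eq_empty _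
    rw [hempty, Submodule.span_empty, Submodule.mem_bot] at hmem
    simpa [Matrix.mulVecLin_apply] using hmem
  have hq0 : q 0 = x 0 := by
    rw [hqdef]
    simp only [hPv0, sub_zero]
  have hx1 : x 1 = A *ᵥ x 0 := by
    rw [hdyn 0, hPv0, Matrix.mulVec_zero, sub_zero]
  -- orthogonality of the q's
  have horth : ∀ i j, i < j → q i ⬝ᵥ q j = 0 := by
    intro i j hij
    have hmemi : q i ∈ Submodule.span ℝ (Set.range fun k : Fin j => x k.val) := by
      have hx : x i ∈ Submodule.span ℝ (Set.range fun k : Fin j => x k.val) :=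
        Submodule.subset_span ⟨⟨i, hij⟩, rfl⟩
      have hp : (Pv i) *ᵥ (x i) ∈ Submodule.span ℝ (Set.range fun k : Fin j => x k.val) := by
        have h1 : (Pv i) *ᵥ (x i) ∈ LinearMap.range (Pv i).mulVecLin := ⟨x i, rfl⟩
        rw [(hPv i).2.2] at h1
        refine Submodule.span_mono ?_ h1
        rintro _ ⟨k, rfl⟩
        exact ⟨⟨k.val, lt_trans k.isLt hij⟩, rfl⟩
      exact Submodule.sub_mem _ hx hp
    -- q j is orthogonal to everything in V j
    have h1 : (q i) ∈ LinearMap.range (Pv j).mulVecLin := by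
      rw [(hPv j).2.2]; exact hmemi
    obtain ⟨y, hy⟩ := h1
    rw [← hy, Matrix.mulVecLin_apply, dotProduct_comm, hqQ j]
    exact proj_orth (hPvs j) (hPvi j) (x j) y
  -- trajectory formula
  have hAsum : At + Bt = A := by
    rw [hAtdef, hBtdef]; noncomm_ring
  have hsplit : ∀ t (z : Fin n → ℝ),
      A *ᵥ z - Bt *ᵥ ((Pv t) *ᵥ z) = At *ᵥ z + Bt *ᵥ ((1 - Pv t) *ᵥ z) := by
    intro t z
    rw [Matrix.mulVec_mulVec, Matrix.mulVec_mulVec, ← Matrix.sub_mulVec, ← Matrix.add_mulVec]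
    have hm : A - Bt * Pv t = At + Bt * (1 - Pv t) := by
      rw [hAtdef, hBtdef]; noncomm_ring
    rw [hm]
  have htraj : ∀ t, x (t + 1) = (At ^ (t + 1)) *ᵥ x 0 + Bt *ᵥ q t := by
    intro t
    induction t with
    | zero =>
      rw [hx1, hq0, pow_one, ← Matrix.add_mulVec, hAsum]
    | succ t ih =>
      rw [hdyn (t + 1), hsplit (t + 1) (x (t + 1)), ← hqQ (t + 1)]
      congr 1
      rw [ih, Matrix.mulVec_add, Matrix.mulVec_mulVec, Matrix.mulVec_mulVec, ← pow_succ',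
        hAB, Matrix.zero_mulVec, add_zero]
  -- norm recursions
  have hstep : ∀ t, eucNorm (x (t + 1)) ≤
      eucNorm ((At ^ (t + 1)) *ᵥ x 0) + c t * eucNorm (q t) := by
    intro t
    rw [htraj t]
    refine (eucNorm_add_le _ _).trans ?_
    have h1 : eucNorm (Bt *ᵥ q t) ≤ c t * eucNorm (q t) := by
      rw [hBtdef, ← Matrix.mulVec_mulVec, ← hAq t]
      exact hPBn _
    linarith
  have hqrec : ∀ t, eucNorm (q (t + 1)) ≤
      eucNorm ((At ^ (t + 1)) *ᵥ x 0) + c t * eucNorm (q t) := by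
    intro t
    rw [hqQ (t + 1), htraj t, Matrix.mulVec_add]
    refine (eucNorm_add_le _ _).trans ?_
    have h1 : eucNorm ((1 - Pv (t + 1)) *ᵥ ((At ^ (t + 1)) *ᵥ x 0))
        ≤ eucNorm ((At ^ (t + 1)) *ᵥ x 0) := hnq _ _
    have h2 : eucNorm ((1 - Pv (t + 1)) *ᵥ (Bt *ᵥ q t)) ≤ c t * eucNorm (q t) := by
      refine (hnq _ _).trans ?_
      rw [hBtdef, ← Matrix.mulVec_mulVec, ← hAq t]
      exact hPBn _
    linarith
  have hq1 : eucNorm (q 1) ≤ c 0 * eucNorm (x 0) := by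
    rw [hqQ 1, hx1]
    calc eucNorm ((1 - Pv 1) *ᵥ (A *ᵥ x 0)) ≤ eucNorm (A *ᵥ x 0) := hnq _ _
      _ = c 0 * eucNorm (q 0) := by rw [← hq0]; exact hAq 0
      _ = c 0 * eucNorm (x 0) := by rw [hq0]
  -- main recursion bound
  have hH : ∀ t, 1 ≤ t → eucNorm (q t) ≤
      (∑ s ∈ Finset.Icc 2 t, (∏ i ∈ Finset.Ico s t, c i) * eucNorm ((At ^ s) *ᵥ x 0))
        + (∏ i ∈ Finset.Ico 0 t, c i) * eucNorm (x 0) := by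
    intro t ht
    induction t, ht using Nat.le_induction with
    | base =>
      rw [Finset.Icc_eq_empty (by omega), Finset.sum_empty, zero_add]
      have h1 : Finset.Ico 0 1 = {0} := rfl
      rw [h1, Finset.prod_singleton]
      exact hq1
    | succ t ht ih =>
      have hmain : eucNorm (q (t + 1)) ≤ eucNorm ((At ^ (t + 1)) *ᵥ x 0)
          + c t * ((∑ s ∈ Finset.Icc 2 t, (∏ i ∈ Finset.Ico s t, c i)
              * eucNorm ((At ^ s) *ᵥ x 0))
            + (∏ i ∈ Finset.Ico 0 t, c i) * eucNorm (x 0)) :=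
        (hqrec t).trans (by nlinarith [hc0 t, hqrec t, ih])
      refine hmain.trans (le_of_eq ?_)
      rw [Finset.sum_Icc_succ_top (show 2 ≤ t + 1 by omega)]
      rw [Finset.Ico_self, Finset.prod_empty, one_mul]
      rw [Finset.prod_Ico_succ_top (Nat.zero_le t)]
      rw [mul_add, Finset.mul_sum]
      have hsum : ∀ s ∈ Finset.Icc 2 t,
          c t * ((∏ i ∈ Finset.Ico s t, c i) * eucNorm ((At ^ s) *ᵥ x 0))
          = (∏ i ∈ Finset.Ico s (t + 1), c i) * eucNorm ((At ^ s) *ᵥ x 0) := by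
        intro s hs
        rw [Finset.mem_Icc] at hs
        rw [Finset.prod_Ico_succ_top hs.2]
        ring
      rw [Finset.sum_congr rfl hsum]
      ring
  -- norms of the free terms
  have haux : ∀ s, 1 ≤ s → eucNorm ((At ^ (s + 1)) *ᵥ x 0) = a s * eucNorm (x 0) := by
    intro s hs
    have hpow : At ^ (s + 1) = At ^ s * A := by
      obtain ⟨s', rfl⟩ : ∃ s', s = s' + 1 := ⟨s - 1, by omega⟩
      have h1 : At ^ (s' + 1) * Bt = 0 := by
        rw [pow_succ, mul_assoc, hAB, mul_zero]
      rw [← hAsum, mul_add, h1, add_zero, ← pow_succ]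
    rw [hpow]
    by_cases h0 : x 0 = 0
    · rw [ha s, hzbar0, if_pos h0, h0]
      simp [eucNorm_zero]
    · have hne : eucNorm (x 0) ≠ 0 := fun hh => h0 (eucNorm_eq_zero hh)
      rw [ha s, hzbar0, if_neg h0, Matrix.mulVec_smul, eucNorm_smul,
        abs_of_nonneg (inv_nonneg.mpr (eucNorm_nonneg _))]
      field_simp
  have ha0 : a 0 * eucNorm (x 0) = eucNorm (A *ᵥ x 0) := by
    by_cases h0 : x 0 = 0
    · rw [ha 0, hzbar0, if_pos h0, h0]
      simp [eucNorm_zero]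
    · have hne : eucNorm (x 0) ≠ 0 := fun hh => h0 (eucNorm_eq_zero hh)
      rw [ha 0, hzbar0, if_neg h0, pow_zero, one_mul, Matrix.mulVec_smul, eucNorm_smul,
        abs_of_nonneg (inv_nonneg.mpr (eucNorm_nonneg _))]
      field_simp
  have hanonneg : ∀ s, 0 ≤ a s := fun s => (ha s) ▸ eucNorm_nonneg _
  -- final assembly
  intro t _
  rcases Nat.eq_zero_or_pos t with ht0 | ht1
  · subst ht0
    rw [Finset.Icc_eq_empty (by omega), Finset.sum_empty, add_zero, hx1, ← ha0]
    have h1 : 0 ≤ instabilityNumber A 1 * eucNorm (x 0) :=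
      mul_nonneg (instabilityNumber_nonneg A 1) (eucNorm_nonneg _)
    nlinarith [h1]
  · -- t ≥ 1
    have hchain : eucNorm (x (t + 1)) ≤ a t * eucNorm (x 0)
        + (∑ s ∈ Finset.Icc 2 t, (∏ i ∈ Finset.Ico s (t + 1), c i)
            * eucNorm ((At ^ s) *ᵥ x 0))
        + (∏ i ∈ Finset.Ico 0 (t + 1), c i) * eucNorm (x 0) := by
      have h1 := hstep t
      rw [haux t ht1] at h1
      have h2 := hH t ht1
      have h3 : c t * eucNorm (q t) ≤
          (∑ s ∈ Finset.Icc 2 t, (∏ i ∈ Finset.Ico s (t + 1), c i)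
              * eucNorm ((At ^ s) *ᵥ x 0))
          + (∏ i ∈ Finset.Ico 0 (t + 1), c i) * eucNorm (x 0) := by
        have h4 : c t * eucNorm (q t) ≤
            c t * ((∑ s ∈ Finset.Icc 2 t, (∏ i ∈ Finset.Ico s t, c i)
                * eucNorm ((At ^ s) *ᵥ x 0))
              + (∏ i ∈ Finset.Ico 0 t, c i) * eucNorm (x 0)) :=
          mul_le_mul_of_nonneg_left h2 (hc0 t)
        refine h4.trans (le_of_eq ?_)
        rw [mul_add, Finset.mul_sum]
        have hsum : ∀ s ∈ Finset.Icc 2 t,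
            c t * ((∏ i ∈ Finset.Ico s t, c i) * eucNorm ((At ^ s) *ᵥ x 0))
            = (∏ i ∈ Finset.Ico s (t + 1), c i) * eucNorm ((At ^ s) *ᵥ x 0) := by
          intro s hs
          rw [Finset.mem_Icc] at hs
          rw [Finset.prod_Ico_succ_top hs.2]
          ring
        rw [Finset.sum_congr rfl hsum, Finset.prod_Ico_succ_top (Nat.zero_le t)]
        ring
      linarith
    refine hchain.trans ?_
    have hterm2 : (∑ s ∈ Finset.Icc 2 t, (∏ i ∈ Finset.Ico s (t + 1), c i)
        * eucNorm ((At ^ s) *ᵥ x 0))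
        ≤ ∑ r ∈ Finset.Icc 1 (t - 1), instabilityNumber A r * a (t - r) * eucNorm (x 0) := by
      have hle : ∀ s ∈ Finset.Icc 2 t,
          (∏ i ∈ Finset.Ico s (t + 1), c i) * eucNorm ((At ^ s) *ᵥ x 0)
          ≤ instabilityNumber A (t + 1 - s) * (a (s - 1) * eucNorm (x 0)) := by
        intro s hs
        rw [Finset.mem_Icc] at hs
        have he : eucNorm ((At ^ s) *ᵥ x 0) = a (s - 1) * eucNorm (x 0) := by
          have h5 := haux (s - 1) (by omega)
          rw [show s - 1 + 1 = s from by omega] at h5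
          exact h5
        rw [he]
        refine mul_le_mul_of_nonneg_right ?_
          (mul_nonneg (hanonneg _) (eucNorm_nonneg _))
        exact prod_le_instab A s (t + 1) q horth
      refine (Finset.sum_le_sum hle).trans (le_of_eq ?_)
      refine Finset.sum_bij' (fun s _ => t + 1 - s) (fun r _ => t + 1 - r) ?_ ?_ ?_ ?_ ?_
      · intro s hs
        rw [Finset.mem_Icc] at hs ⊢
        omega
      · intro r hr
        rw [Finset.mem_Icc] at hr ⊢
        omega
      · intro s hs
        rw [Finset.mem_Icc] at hs
        omega
      · intro r hr
        rw [Finset.mem_Icc] at hr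
        omega
      · intro s hs
        rw [Finset.mem_Icc] at hs
        rw [show t - (t + 1 - s) = s - 1 from by omega]
        ring
    have hterm3 : (∏ i ∈ Finset.Ico 0 (t + 1), c i) * eucNorm (x 0)
        ≤ instabilityNumber A (t + 1) * eucNorm (x 0) := by
      refine mul_le_mul_of_nonneg_right ?_ (eucNorm_nonneg _)
      have h6 := prod_le_instab A 0 (t + 1) q horth
      rw [Nat.sub_zero] at h6
      exact h6
    calc a t * eucNorm (x 0)
        + (∑ s ∈ Finset.Icc 2 t, (∏ i ∈ Finset.Ico s (t + 1), c i)
            * eucNorm ((At ^ s) *ᵥ x 0))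
        + (∏ i ∈ Finset.Ico 0 (t + 1), c i) * eucNorm (x 0)
        ≤ a t * eucNorm (x 0)
          + (∑ r ∈ Finset.Icc 1 (t - 1), instabilityNumber A r * a (t - r) * eucNorm (x 0))
          + instabilityNumber A (t + 1) * eucNorm (x 0) := by linarith
      _ = (instabilityNumber A (t + 1) + a t
          + ∑ r ∈ Finset.Icc 1 (t - 1), instabilityNumber A r * a (t - r)) * eucNorm (x 0) := by
        rw [add_mul, add_mul, Finset.sum_mul]
        ring
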